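/- arXiv:1708.05569 — 5 statements merged into one kernel-verified Lean document; each statement's English description precedes it below -/
import Mathlib

section
/- If the largest eigenvalue λ₁(M) of the modularity matrix M (symmetric with respect to ⟨·,·⟩_μ) is positive, then max over x ∈ ℝ^n with ⟨x,𝟙⟩_μ = 0 of r_M(x) equals max over all x ∈ ℝ^n of r_M(x) = λ₁(M); in particular λ₁(M) ≥ q_μ(A) for every nontrivial subset A ⊆ V. -/
open Finset

/-- If the largest eigenvalue `λ₁(M)` of the modularity matrix is positive,
then the maximum of the Rayleigh quotient `r_M` over vectors μ-orthogonal to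
`𝟙` equals `λ₁(M)`; in particular `λ₁(M) ≥ q_μ(A)` for every nontrivial
subset `A`. -/
theorem linear_relaxation_normalized_modularity
    (n : ℕ) (w : Fin n → Fin n → ℝ) (μ d : Fin n → ℝ) (volV μV : ℝ)
    (M : Fin n → Fin n → ℝ) (Q qmu : Finset (Fin n) → ℝ)
    (rM : (Fin n → ℝ) → ℝ) (lam : ℝ)
    (hμ : ∀ i, 0 < μ i)
    (hsymw : ∀ i j, w i j = w j i)
    (hd : ∀ i, d i = ∑ j, w i j)
    (hvol : volV = ∑ i, d i)
    (hvolpos : 0 < volV)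
    (hμV : μV = ∑ i, μ i)
    (hM : ∀ i j, M i j = (1 / μ i) * (w i j - d i * d j / volV))
    (hsym : ∀ i j, μ i * M i j = μ j * M j i)
    (hrow : ∀ i, ∑ j, M i j = 0)
    (hQ : ∀ A : Finset (Fin n),
      Q A = (∑ i ∈ A, ∑ j ∈ A, w i j) - (∑ i ∈ A, d i) ^ 2 / volV)
    (hqmu : ∀ A : Finset (Fin n),
      qmu A = μV * Q A / ((∑ j ∈ A, μ j) * (∑ j ∈ Aᶜ, μ j)))
    (hrM : ∀ x, rM x = (∑ i, μ i * x i * (∑ j, M i j * x j)) / (∑ i, μ i * x i ^ 2))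
    (hlam : IsGreatest {r : ℝ | ∃ x : Fin n → ℝ, x ≠ 0 ∧ r = rM x} lam)
    (hpos : 0 < lam) :
    IsGreatest {r : ℝ | ∃ x : Fin n → ℝ,
        x ≠ 0 ∧ (∑ i, μ i * x i) = 0 ∧ r = rM x} lam ∧
    ∀ A : Finset (Fin n), A ≠ ∅ → A ≠ Finset.univ → qmu A ≤ lam := by
  -- B is the "unnormalized" modularity matrix: B i j = μ i * M i j
  set B : Fin n → Fin n → ℝ := fun i j => w i j - d i * d j / volV with hBdef
  have hB : ∀ i j, μ i * M i j = B i j := by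
    intro i j
    simp only [hBdef]
    rw [hM]
    have h1 : μ i ≠ 0 := (hμ i).ne'
    field_simp
  have hBsym : ∀ i j, B i j = B j i := by
    intro i j
    simp only [hBdef]
    rw [hsymw]; ring
  have hBrow : ∀ i, ∑ j, B i j = 0 := by
    intro i
    calc (∑ j, B i j) = ∑ j, μ i * M i j := by
          exact Finset.sum_congr rfl fun j _ => (hB i j).symm
      _ = μ i * ∑ j, M i j := (Finset.mul_sum _ _ _).symm
      _ = 0 := by rw [hrow i, mul_zero]
  have hBcol : ∀ j, ∑ i, B i j = 0 := by
    intro j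
    calc (∑ i, B i j) = ∑ i, B j i := Finset.sum_congr rfl fun i _ => hBsym i j
      _ = 0 := hBrow j
  -- Rewrite the Rayleigh numerator via B
  have hg : ∀ x : Fin n → ℝ,
      (∑ i, μ i * x i * (∑ j, M i j * x j)) = ∑ i, x i * (∑ j, B i j * x j) := by
    intro x
    simp only [Finset.mul_sum]
    refine Finset.sum_congr rfl fun i _ => Finset.sum_congr rfl fun j _ => ?_
    rw [← hB]; ring
  -- Positivity of the denominator for nonzero x
  have hDpos : ∀ x : Fin n → ℝ, x ≠ 0 → 0 < ∑ i, μ i * x i ^ 2 := by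
    intro x hx
    have hex : ∃ i, x i ≠ 0 := by
      by_contra h
      push_neg at h
      exact hx (funext fun i => h i)
    obtain ⟨i, hi⟩ := hex
    refine Finset.sum_pos' (fun j _ => ?_) ⟨i, Finset.mem_univ i, ?_⟩
    · have := (hμ j).le
      positivity
    · exact mul_pos (hμ i) (pow_two_pos_of_ne_zero hi)
  -- the maximizer
  obtain ⟨y, hy0, hylam⟩ := hlam.1
  have hne : Nonempty (Fin n) := by
    by_contra h
    exact hy0 (funext fun i => absurd ⟨i⟩ h)
  have hμVpos : 0 < μV := by
    rw [hμV]
    exact Finset.sum_pos (fun i _ => hμ i) Finset.univ_nonempty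
  set Ny : ℝ := ∑ i, y i * (∑ j, B i j * y j) with hNy
  set Dy : ℝ := ∑ i, μ i * y i ^ 2 with hDy
  have hDypos : 0 < Dy := hDpos y hy0
  have hlamNy : lam = Ny / Dy := by rw [hylam, hrM, hg]
  have hNypos : 0 < Ny := by
    have : 0 < Ny / Dy := hlamNy ▸ hpos
    exact (div_pos_iff_of_pos_right hDypos).mp this
  set s : ℝ := ∑ i, μ i * y i with hs
  set c : ℝ := s / μV with hc
  set x : Fin n → ℝ := fun i => y i - c with hxdef
  -- orthogonality
  have horth : (∑ i, μ i * x i) = 0 := by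
    have : (∑ i, μ i * x i) = s - c * μV := by
      simp only [hxdef, mul_sub]
      rw [Finset.sum_sub_distrib, ← Finset.sum_mul, ← hs, ← hμV, mul_comm]
    rw [this, hc, div_mul_cancel₀ _ (ne_of_gt hμVpos), sub_self]
  -- the numerator is unchanged
  have hBx : ∀ i, (∑ j, B i j * x j) = ∑ j, B i j * y j := by
    intro i
    simp only [hxdef, mul_sub]
    rw [Finset.sum_sub_distrib, ← Finset.sum_mul, hBrow, zero_mul, sub_zero]
  have hcolg : (∑ i, (∑ j, B i j * y j)) = 0 := by
    rw [Finset.sum_comm]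
    calc (∑ j, ∑ i, B i j * y j) = ∑ j, (∑ i, B i j) * y j := by
          refine Finset.sum_congr rfl fun j _ => (Finset.sum_mul _ _ _).symm
      _ = 0 := by
          refine Finset.sum_eq_zero fun j _ => ?_
          rw [hBcol, zero_mul]
  have hNx : (∑ i, x i * (∑ j, B i j * x j)) = Ny := by
    calc (∑ i, x i * (∑ j, B i j * x j))
        = ∑ i, (y i * (∑ j, B i j * y j) - c * (∑ j, B i j * y j)) := by
          refine Finset.sum_congr rfl fun i _ => ?_
          rw [hBx]
          simp only [hxdef]
          ring
      _ = Ny - c * (∑ i, (∑ j, B i j * y j)) := by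
          rw [Finset.sum_sub_distrib, ← Finset.mul_sum, hNy]
      _ = Ny := by rw [hcolg, mul_zero, sub_zero]
  -- the denominator decreases
  have hDx : (∑ i, μ i * x i ^ 2) = Dy - s ^ 2 / μV := by
    have e : ∀ i, μ i * x i ^ 2 = μ i * y i ^ 2 - 2 * c * (μ i * y i) + c ^ 2 * μ i := by
      intro i; simp only [hxdef]; ring
    calc (∑ i, μ i * x i ^ 2)
        = ∑ i, (μ i * y i ^ 2 - 2 * c * (μ i * y i) + c ^ 2 * μ i) :=
          Finset.sum_congr rfl fun i _ => e i
      _ = Dy - 2 * c * s + c ^ 2 * μV := by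
          rw [Finset.sum_add_distrib, Finset.sum_sub_distrib, ← Finset.mul_sum,
            ← Finset.mul_sum, ← hs, ← hμV, hDy]
      _ = Dy - s ^ 2 / μV := by
          rw [hc]; field_simp; ring
  have hx0 : x ≠ 0 := by
    intro h
    have hyc : ∀ i, y i = c := by
      intro i
      have := congrFun h i
      simp only [hxdef, Pi.zero_apply] at this
      linarith
    have : Ny = 0 := by
      rw [hNy]
      refine Finset.sum_eq_zero fun i _ => ?_
      have hz : (∑ j, B i j * y j) = (∑ j, B i j) * c := by
        rw [Finset.sum_mul]
        exact Finset.sum_congr rfl fun j _ => by rw [hyc j]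
      rw [hz, hBrow, zero_mul, mul_zero]
    linarith
  have hDxpos : 0 < ∑ i, μ i * x i ^ 2 := hDpos x hx0
  have hDxle : (∑ i, μ i * x i ^ 2) ≤ Dy := by
    rw [hDx]
    have : 0 ≤ s ^ 2 / μV := by positivity
    linarith
  have hrMx : rM x = Ny / (∑ i, μ i * x i ^ 2) := by rw [hrM, hg, hNx]
  have hgele : lam ≤ rM x := by
    rw [hrMx, hlamNy]
    exact div_le_div_of_nonneg_left hNypos.le hDxpos hDxle
  have hlerM : rM x ≤ lam := hlam.2 ⟨x, hx0, rfl⟩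
  have hxlam : lam = rM x := le_antisymm hgele hlerM
  constructor
  · constructor
    · exact ⟨x, hx0, horth, hxlam⟩
    · intro r hr
      obtain ⟨z, hz0, _, hz⟩ := hr
      exact hlam.2 ⟨z, hz0, hz⟩
  · -- second part
    intro A hA1 hA2
    set a : ℝ := ∑ i ∈ A, μ i with ha
    set b : ℝ := ∑ i ∈ Aᶜ, μ i with hb
    have hAne : A.Nonempty := Finset.nonempty_iff_ne_empty.mpr hA1
    have hAcne : (Aᶜ : Finset (Fin n)).Nonempty := by
      rw [Finset.nonempty_iff_ne_empty]
      intro h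
      exact hA2 (by simpa using congrArg compl h)
    have hapos : 0 < a := Finset.sum_pos (fun i _ => hμ i) hAne
    have hbpos : 0 < b := Finset.sum_pos (fun i _ => hμ i) hAcne
    have habV : a + b = μV := by
      rw [hμV, ha, hb]
      exact Finset.sum_add_sum_compl A μ
    set z : Fin n → ℝ := fun i => if i ∈ A then b else -a with hzdef
    obtain ⟨i0, hi0⟩ := hAne
    have hz0 : z ≠ 0 := by
      intro h
      have := congrFun h i0
      simp only [hzdef, hi0, if_pos, Pi.zero_apply] at this
      linarith
    -- S = Q A
    have hSQ : (∑ i ∈ A, ∑ j ∈ A, B i j) = Q A := by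
      rw [hQ]
      have e1 : (∑ i ∈ A, ∑ j ∈ A, B i j)
          = (∑ i ∈ A, ∑ j ∈ A, w i j) - ∑ i ∈ A, ∑ j ∈ A, d i * d j / volV := by
        rw [← Finset.sum_sub_distrib]
        refine Finset.sum_congr rfl fun i _ => ?_
        rw [← Finset.sum_sub_distrib]
      have e2 : (∑ i ∈ A, ∑ j ∈ A, d i * d j / volV) = (∑ i ∈ A, d i) ^ 2 / volV := by
        rw [sq, Finset.sum_mul_sum]  -- check
        rw [Finset.sum_div]
        refine Finset.sum_congr rfl fun i _ => ?_
        rw [Finset.sum_div]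
      rw [e1, e2]
    -- row sums over A and Aᶜ
    have hrowsplit : ∀ i, (∑ j ∈ Aᶜ, B i j) = -(∑ j ∈ A, B i j) := by
      intro i
      have := Finset.sum_add_sum_compl A (fun j => B i j)
      rw [hBrow i] at this
      linarith
    have hcolsplit : (∑ i ∈ Aᶜ, ∑ j ∈ A, B i j) = -(∑ i ∈ A, ∑ j ∈ A, B i j) := by
      have h0 : (∑ i, ∑ j ∈ A, B i j) = 0 := by
        rw [Finset.sum_comm]
        exact Finset.sum_eq_zero fun j _ => hBcol j
      have := Finset.sum_add_sum_compl A (fun i => ∑ j ∈ A, B i j)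
      rw [h0] at this
      linarith
    -- inner sum
    have hinner : ∀ i, (∑ j, B i j * z j) = (a + b) * (∑ j ∈ A, B i j) := by
      intro i
      rw [← Finset.sum_add_sum_compl A (fun j => B i j * z j)]
      have e1 : (∑ j ∈ A, B i j * z j) = b * (∑ j ∈ A, B i j) := by
        rw [Finset.mul_sum]
        refine Finset.sum_congr rfl fun j hj => ?_
        simp only [hzdef, if_pos hj]; ring
      have e2 : (∑ j ∈ Aᶜ, B i j * z j) = -a * (∑ j ∈ Aᶜ, B i j) := by
        rw [Finset.mul_sum]
        refine Finset.sum_congr rfl fun j hj => ?_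
        have : j ∉ A := Finset.mem_compl.mp hj
        simp only [hzdef, if_neg this]; ring
      rw [e1, e2, hrowsplit]; ring
    -- numerator
    have hNz : (∑ i, z i * (∑ j, B i j * z j)) = (a + b) ^ 2 * (∑ i ∈ A, ∑ j ∈ A, B i j) := by
      calc (∑ i, z i * (∑ j, B i j * z j))
          = ∑ i, z i * ((a + b) * (∑ j ∈ A, B i j)) :=
            Finset.sum_congr rfl fun i _ => by rw [hinner]
        _ = (a + b) * ∑ i, z i * (∑ j ∈ A, B i j) := by
            rw [Finset.mul_sum]
            exact Finset.sum_congr rfl fun i _ => by ring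
        _ = (a + b) ^ 2 * (∑ i ∈ A, ∑ j ∈ A, B i j) := by
            rw [← Finset.sum_add_sum_compl A (fun i => z i * (∑ j ∈ A, B i j))]
            have e1 : (∑ i ∈ A, z i * (∑ j ∈ A, B i j))
                = b * (∑ i ∈ A, ∑ j ∈ A, B i j) := by
              rw [Finset.mul_sum]
              refine Finset.sum_congr rfl fun i hi => ?_
              simp only [hzdef, if_pos hi]
            have e2 : (∑ i ∈ Aᶜ, z i * (∑ j ∈ A, B i j))
                = -a * (∑ i ∈ Aᶜ, ∑ j ∈ A, B i j) := by
              rw [Finset.mul_sum]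
              refine Finset.sum_congr rfl fun i hi => ?_
              have : i ∉ A := Finset.mem_compl.mp hi
              simp only [hzdef, if_neg this]
            rw [e1, e2, hcolsplit]; ring
    -- denominator
    have hDz : (∑ i, μ i * z i ^ 2) = a * b * (a + b) := by
      rw [← Finset.sum_add_sum_compl A (fun i => μ i * z i ^ 2)]
      have e1 : (∑ i ∈ A, μ i * z i ^ 2) = a * b ^ 2 := by
        rw [ha, Finset.sum_mul]
        refine Finset.sum_congr rfl fun i hi => ?_
        simp only [hzdef, if_pos hi]
      have e2 : (∑ i ∈ Aᶜ, μ i * z i ^ 2) = b * a ^ 2 := by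
        rw [hb, Finset.sum_mul]
        refine Finset.sum_congr rfl fun i hi => ?_
        have : i ∉ A := Finset.mem_compl.mp hi
        simp only [hzdef, if_neg this]
        ring
      rw [e1, e2]; ring
    have hrMz : rM z = qmu A := by
      rw [hrM, hg, hNz, hDz, hqmu, ← ha, ← hb, ← hSQ, ← habV]
      field_simp
    have := hlam.2 ⟨z, hz0, rfl⟩
    rw [hrMz] at this
    exact this
end

section
/- Let F, H: P(V) → ℝ be set functions with 0 < H(A) ≤ 1 for all A ∉ {∅, V}, and F(V) = 0. Then max_{A ⊆ V} F(A)/H(A) ≥ (1/2) max_{‖x‖_∞ ≤ 1} f_F(x), where f_F is the Lovász extension of F. -/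
open Finset
open Fin.NatCast

/-- The Lovász extension of a set function, computed with respect to a
sorting permutation `σ` of `x`. -/
noncomputable def lovasz {n : ℕ} (F : Finset (Fin (n + 1)) → ℝ)
    (x : Fin (n + 1) → ℝ) (σ : Equiv.Perm (Fin (n + 1))) : ℝ :=
  (∑ i : Fin n,
      F (Finset.univ.filter fun k => x (σ i.succ) ≤ x (σ k)) *
        (x (σ i.succ) - x (σ i.castSucc)))
    + F Finset.univ * x (σ 0)

/-- If `0 < H(A) ≤ 1` for all nontrivial `A` and `F(V) = 0`, then
`max_{A⊆V} F(A)/H(A) ≥ (1/2) max_{‖x‖_∞ ≤ 1} f_F(x)`. -/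
theorem ratio_bound_lovasz
    (n : ℕ) (F H : Finset (Fin (n + 1)) → ℝ)
    (hF0 : F ∅ = 0) (hFV : F Finset.univ = 0)
    (hH : ∀ A : Finset (Fin (n + 1)), A ≠ ∅ → A ≠ Finset.univ →
      0 < H A ∧ H A ≤ 1) :
    ∀ (x : Fin (n + 1) → ℝ) (σ : Equiv.Perm (Fin (n + 1))),
      Monotone (x ∘ σ) → (∀ i, |x i| ≤ 1) →
      ∃ A : Finset (Fin (n + 1)), lovasz F x σ ≤ 2 * (F A / H A) := by
  intro x σ hmono hbound
  classical
  set d : Fin n → ℝ := fun i => x (σ i.succ) - x (σ i.castSucc) with hd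
  set S : Fin n → Finset (Fin (n + 1)) :=
    fun i => Finset.univ.filter fun k => x (σ i.succ) ≤ x (σ k) with hS
  have hd0 : ∀ i, 0 ≤ d i := fun i =>
    sub_nonneg.2 (hmono (Fin.castSucc_lt_succ (i := i)).le)
  have hSprop : ∀ i, 0 < d i → S i ≠ ∅ ∧ S i ≠ Finset.univ := by
    intro i hi
    constructor
    · apply Finset.ne_empty_of_mem (a := i.succ)
      simp [hS]
    · intro hcon
      have hmem : i.castSucc ∈ S i := hcon ▸ Finset.mem_univ _
      simp only [hS, Finset.mem_filter, Finset.mem_univ, true_and] at hmem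
      have : d i ≤ 0 := by simp [hd]; linarith
      linarith
  -- telescoping sum bound
  have hsum2 : ∑ i : Fin n, d i ≤ 2 := by
    set g : ℕ → ℝ := fun j => x (σ (j : Fin (n + 1))) with hg
    have hdi : ∀ i : Fin n, d i = g (i.val + 1) - g i.val := by
      intro i
      have h1 : ((i.val + 1 : ℕ) : Fin (n + 1)) = i.succ := by
        apply Fin.ext
        simp [Fin.val_cast_of_lt (Nat.succ_lt_succ i.isLt)]
      have h2 : ((i.val : ℕ) : Fin (n + 1)) = i.castSucc := by
        apply Fin.ext
        simp [Fin.val_cast_of_lt (Nat.lt_succ_of_lt i.isLt)]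
      simp [hd, hg, h1, h2]
    have htel : ∑ i : Fin n, d i = g n - g 0 := by
      calc ∑ i : Fin n, d i = ∑ i : Fin n, (g (i.val + 1) - g i.val) := by
            exact Finset.sum_congr rfl fun i _ => hdi i
        _ = ∑ i ∈ Finset.range n, (g (i + 1) - g i) :=
            Fin.sum_univ_eq_sum_range (fun j => g (j + 1) - g j) n
        _ = g n - g 0 := Finset.sum_range_sub g n
    rw [htel]
    have h1 : g n ≤ 1 := le_trans (le_abs_self _) (hbound _)
    have h2 : -1 ≤ g 0 := neg_le_of_abs_le (hbound _)
    linarith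
  have hlov : lovasz F x σ = ∑ i : Fin n, F (S i) * d i := by
    simp [lovasz, hFV, hS, hd]
  set T : Finset (Fin n) := Finset.univ.filter fun i => 0 < d i with hT
  by_cases hTne : T.Nonempty
  · obtain ⟨i₀, hi₀T, hmax⟩ := T.exists_max_image (fun i => F (S i) / H (S i)) hTne
    set c := F (S i₀) / H (S i₀) with hc
    by_cases hcpos : 0 < c
    · refine ⟨S i₀, ?_⟩
      rw [hlov]
      have hterm : ∀ i : Fin n, F (S i) * d i ≤ c * d i := by
        intro i
        rcases eq_or_lt_of_le (hd0 i) with h | h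
        · rw [← h]; simp
        · have hiT : i ∈ T := by simp [hT, h]
          have hr := hmax i hiT
          obtain ⟨hne, hnu⟩ := hSprop i h
          obtain ⟨hHpos, hH1⟩ := hH (S i) hne hnu
          have hFle : F (S i) ≤ c * H (S i) := (div_le_iff₀ hHpos).1 hr
          have hFle' : F (S i) ≤ c := by nlinarith
          exact mul_le_mul_of_nonneg_right hFle' h.le
      calc ∑ i : Fin n, F (S i) * d i ≤ ∑ i : Fin n, c * d i :=
            Finset.sum_le_sum fun i _ => hterm i
        _ = c * ∑ i : Fin n, d i := by rw [Finset.mul_sum]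
        _ ≤ c * 2 := mul_le_mul_of_nonneg_left hsum2 hcpos.le
        _ = 2 * c := mul_comm _ _
    · refine ⟨∅, ?_⟩
      rw [hlov, hF0, zero_div, mul_zero]
      apply Finset.sum_nonpos
      intro i _
      rcases eq_or_lt_of_le (hd0 i) with h | h
      · rw [← h]; simp
      · have hiT : i ∈ T := by simp [hT, h]
        have hr := hmax i hiT
        obtain ⟨hne, hnu⟩ := hSprop i h
        obtain ⟨hHpos, _⟩ := hH (S i) hne hnu
        have hFle : F (S i) ≤ c * H (S i) := (div_le_iff₀ hHpos).1 hr
        have hc0 : c ≤ 0 := not_lt.1 hcpos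
        have : F (S i) ≤ 0 := by nlinarith
        exact mul_nonpos_of_nonpos_of_nonneg this h.le
  · refine ⟨∅, ?_⟩
    rw [hlov, hF0, zero_div, mul_zero]
    apply le_of_eq
    apply Finset.sum_eq_zero
    intro i _
    have : ¬ 0 < d i := by
      intro h
      exact hTne ⟨i, by simp [hT, h]⟩
    have : d i = 0 := le_antisymm (not_lt.1 this) (hd0 i)
    rw [this, mul_zero]
end

section
/- Exactness of the dual nonlinear relaxation: r*_𝓜(𝟙_A − 𝟙_{V∖A}) = q(A)·μ(V) for every A ⊆ V, and max_{A⊆V} q(A) = (1/μ(V)) · max_{x ∈ ℝ^n, x≠0} r*_𝓜(x), where r*_𝓜(x) = ⟨x, 𝓜(x)⟩_μ / ‖x‖_∞. -/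
open Finset



private noncomputable def QB {n : ℕ} (B : Fin (n+1) → Fin (n+1) → ℝ) (A : Finset (Fin (n+1))) : ℝ :=
  ∑ i ∈ A, ∑ j ∈ A, B i j

private noncomputable def EB {n : ℕ} (B : Fin (n+1) → Fin (n+1) → ℝ) (x : Fin (n+1) → ℝ) : ℝ :=
  -(1/2) * ∑ i, ∑ j, B i j * |x i - x j|

private lemma EB_indicator {n : ℕ} (B : Fin (n+1) → Fin (n+1) → ℝ)
    (hsym : ∀ i j, B i j = B j i) (hrow : ∀ i, ∑ j, B i j = 0)
    (A : Finset (Fin (n+1))) :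
    EB B (fun i => if i ∈ A then (1:ℝ) else 0) = QB B A := by
  set c : Fin (n+1) → ℝ := fun i => if i ∈ A then (1:ℝ) else 0 with hc
  have hc01 : ∀ i, c i = 0 ∨ c i = 1 := by
    intro i; by_cases h : i ∈ A <;> simp [hc, h]
  have habs : ∀ i j, |c i - c j| = c i + c j - 2 * (c i * c j) := by
    intro i j
    rcases hc01 i with h | h <;> rcases hc01 j with h' | h' <;> rw [h, h'] <;> norm_num
  have h1 : ∑ i, ∑ j, B i j * c i = 0 := by
    have : ∀ i : Fin (n+1), ∑ j, B i j * c i = (∑ j, B i j) * c i := by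
      intro i; rw [Finset.sum_mul]
    simp only [this, hrow, zero_mul, Finset.sum_const_zero]
  have h2 : ∑ i, ∑ j, B i j * c j = 0 := by
    rw [Finset.sum_comm]
    have : ∀ j : Fin (n+1), ∑ i, B i j * c j = (∑ i, B j i) * c j := by
      intro j
      rw [Finset.sum_mul]
      exact Finset.sum_congr rfl fun i _ => by rw [hsym]
    simp only [this, hrow, zero_mul, Finset.sum_const_zero]
  have h3 : ∑ i, ∑ j, B i j * (c i * c j) = QB B A := by
    have e : ∀ i j, B i j * (c i * c j)
        = if i ∈ A then (if j ∈ A then B i j else 0) else 0 := by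
      intro i j
      by_cases h : i ∈ A <;> by_cases h' : j ∈ A <;> simp [hc, h, h']
    have e2 : ∀ i : Fin (n+1),
        (∑ j, if i ∈ A then (if j ∈ A then B i j else 0) else 0)
        = if i ∈ A then (∑ j ∈ A, B i j) else 0 := by
      intro i; by_cases h : i ∈ A <;> simp [h, Finset.sum_ite_mem]
    simp only [e, e2, Finset.sum_ite_mem, Finset.univ_inter, QB]
  have hsum : ∑ i, ∑ j, B i j * |c i - c j| = -2 * QB B A := by
    have e : ∀ i j : Fin (n+1), B i j * |c i - c j|
        = B i j * c i + B i j * c j - 2 * (B i j * (c i * c j)) := by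
      intro i j; rw [habs]; ring
    calc ∑ i, ∑ j, B i j * |c i - c j|
        = ∑ i, ∑ j, (B i j * c i + B i j * c j - 2 * (B i j * (c i * c j))) := by
          simp only [e]
      _ = (∑ i, ∑ j, B i j * c i) + (∑ i, ∑ j, B i j * c j)
          - 2 * ∑ i, ∑ j, B i j * (c i * c j) := by
          simp only [Finset.sum_sub_distrib, Finset.sum_add_distrib, Finset.mul_sum]
      _ = -2 * QB B A := by rw [h1, h2, h3]; ring
  unfold EB
  rw [hsum]; ring


private lemma EB_decomp {n : ℕ} (B : Fin (n+1) → Fin (n+1) → ℝ)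
    (x y z : Fin (n+1) → ℝ) (t : ℝ)
    (h : ∀ i j, |x i - x j| = |y i - y j| + t * |z i - z j|) :
    EB B x = EB B y + t * EB B z := by
  have e : ∀ i j : Fin (n+1), B i j * |x i - x j|
      = B i j * |y i - y j| + t * (B i j * |z i - z j|) := by
    intro i j; rw [h]; ring
  have key : ∑ i, ∑ j, B i j * |x i - x j|
      = (∑ i, ∑ j, B i j * |y i - y j|) + t * ∑ i, ∑ j, B i j * |z i - z j| := by
    simp only [e, Finset.sum_add_distrib, Finset.mul_sum]
  unfold EB
  rw [key]; ring

private lemma EB_le {n : ℕ} (B : Fin (n+1) → Fin (n+1) → ℝ)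
    (hsym : ∀ i j, B i j = B j i) (hrow : ∀ i, ∑ j, B i j = 0)
    (Qstar : ℝ) (hQs : ∀ A, QB B A ≤ Qstar) :
    ∀ (k : ℕ) (x : Fin (n+1) → ℝ) (a b : ℝ), (Finset.image x univ).card ≤ k →
      (∀ i, a ≤ x i) → (∀ i, x i ≤ b) → EB B x ≤ (b - a) * Qstar := by
  have hQ0 : 0 ≤ Qstar := le_trans (by simp [QB]) (hQs ∅)
  intro k
  induction k with
  | zero =>
    intro x a b hcard ha hb
    exfalso
    have : (Finset.image x univ).Nonempty := Finset.Nonempty.image Finset.univ_nonempty x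
    have := Finset.card_pos.mpr this
    omega
  | succ k ih =>
    intro x a b hcard ha hb
    have hab : a ≤ b := le_trans (ha 0) (hb 0)
    set s := Finset.image x univ with hs
    have hsne : s.Nonempty := Finset.Nonempty.image Finset.univ_nonempty x
    by_cases hcard1 : s.card ≤ 1
    · have hconst : ∀ i j : Fin (n+1), x i = x j := by
        intro i j
        exact Finset.card_le_one.mp hcard1 _ (mem_image_of_mem x (mem_univ i)) _
          (mem_image_of_mem x (mem_univ j))
      have hz : EB B x = 0 := by
        have : ∀ i j : Fin (n+1), B i j * |x i - x j| = 0 := by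
          intro i j; rw [hconst i j]; simp
        simp [EB, this]
      rw [hz]
      exact mul_nonneg (by linarith) hQ0
    · push_neg at hcard1
      set m := s.min' hsne with hm
      have hmem_m : m ∈ s := s.min'_mem hsne
      have hene : (s.erase m).Nonempty := by
        rw [← Finset.card_pos, Finset.card_erase_of_mem hmem_m]
        omega
      set m' := (s.erase m).min' hene with hm'
      have hm'mem : m' ∈ s.erase m := (s.erase m).min'_mem hene
      have hm'ne : m' ≠ m := (Finset.mem_erase.mp hm'mem).1
      have hmm'le : m ≤ m' := s.min'_le _ (Finset.mem_erase.mp hm'mem).2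
      have hmm' : m < m' := lt_of_le_of_ne hmm'le (Ne.symm hm'ne)
      have hxmem : ∀ i, x i ∈ s := fun i => mem_image_of_mem x (mem_univ i)
      have hmin : ∀ i, m ≤ x i := fun i => s.min'_le _ (hxmem i)
      have hsecond : ∀ i, x i ≠ m → m' ≤ x i := fun i h =>
        (s.erase m).min'_le _ (Finset.mem_erase.mpr ⟨h, hxmem i⟩)
      have ham : a ≤ m := by
        obtain ⟨i, _, hi⟩ := Finset.mem_image.mp hmem_m
        exact hi ▸ ha i
      have hvb : ∀ v ∈ s, v ≤ b := by
        intro v hv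
        obtain ⟨i, _, hi⟩ := Finset.mem_image.mp hv
        exact hi ▸ hb i
      set A : Finset (Fin (n+1)) := univ.filter (fun i => x i ≠ m) with hA
      set y : Fin (n+1) → ℝ := fun i => if x i = m then m' else x i with hy
      set c : Fin (n+1) → ℝ := fun i => if i ∈ A then (1:ℝ) else 0 with hc
      have hcval : ∀ i, c i = if x i = m then 0 else 1 := by
        intro i; by_cases h : x i = m <;> simp [hc, hA, h]
      have hkey : ∀ i j, |x i - x j| = |y i - y j| + (m' - m) * |c i - c j| := by
        intro i j
        by_cases hi : x i = m <;> by_cases hj : x j = m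
        · simp [hy, hcval, hi, hj]
        · have h1 : m' ≤ x j := hsecond j hj
          have hm2 : m ≤ x j := hmin j
          have ey : y i = m' := by simp [hy, hi]
          have ey' : y j = x j := by simp [hy, hj]
          have ec : c i = 0 := by simp [hcval, hi]
          have ec' : c j = 1 := by simp [hcval, hj]
          rw [hi, ey, ey', ec, ec', abs_of_nonpos (by linarith : m - x j ≤ 0),
            abs_of_nonpos (by linarith : m' - x j ≤ 0),
            abs_of_nonpos (by norm_num : (0:ℝ) - 1 ≤ 0)]
          ring
        · have h1 : m' ≤ x i := hsecond i hi
          have hm2 : m ≤ x i := hmin i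
          have ey : y i = x i := by simp [hy, hi]
          have ey' : y j = m' := by simp [hy, hj]
          have ec : c i = 1 := by simp [hcval, hi]
          have ec' : c j = 0 := by simp [hcval, hj]
          rw [hj, ey, ey', ec, ec', abs_of_nonneg (by linarith : 0 ≤ x i - m),
            abs_of_nonneg (by linarith : 0 ≤ x i - m'),
            abs_of_nonneg (by norm_num : (0:ℝ) ≤ 1 - 0)]
          ring
        · simp [hy, hcval, hi, hj]
      have hyimg : Finset.image y univ ⊆ s.erase m := by
        intro v hv
        obtain ⟨i, _, hi⟩ := Finset.mem_image.mp hv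
        by_cases h : x i = m
        · have hv' : v = m' := by rw [← hi]; simp [hy, h]
          subst hv'; exact hm'mem
        · have hv' : v = x i := by rw [← hi]; simp [hy, h]
          subst hv'; exact Finset.mem_erase.mpr ⟨h, hxmem i⟩
      have hycard : (Finset.image y univ).card ≤ k := by
        have h1 := Finset.card_le_card hyimg
        rw [Finset.card_erase_of_mem hmem_m] at h1
        omega
      have hy_lb : ∀ i, m' ≤ y i := by
        intro i; by_cases h : x i = m
        · simp [hy, h]
        · simp only [hy, if_neg h]; exact hsecond i h
      have hy_ub : ∀ i, y i ≤ b := by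
        intro i; by_cases h : x i = m
        · simp only [hy, if_pos h]
          exact hvb m' (Finset.mem_erase.mp hm'mem).2
        · simp only [hy, if_neg h]; exact hb i
      have hEy := ih y m' b hycard hy_lb hy_ub
      have hdec : EB B x = EB B y + (m' - m) * EB B c := EB_decomp B x y c (m' - m) hkey
      have hEc : EB B c = QB B A := EB_indicator B hsym hrow A
      rw [hdec, hEc]
      have h2 : (m' - m) * QB B A ≤ (m' - m) * Qstar :=
        mul_le_mul_of_nonneg_left (hQs A) (by linarith)
      nlinarith [hEy, h2]
/-- Exactness of the dual nonlinear relaxation: `r*_𝓜(𝟙_A − 𝟙_{V∖A}) = q(A)μ(V)`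
for every `A ⊆ V`, and `max_A q(A) = (1/μ(V)) max_{x ≠ 0} r*_𝓜(x)`. -/
theorem exact_relaxation_modularity_dual
    (n : ℕ) (w : Fin (n + 1) → Fin (n + 1) → ℝ)
    (μ d : Fin (n + 1) → ℝ) (volV μV : ℝ)
    (M : Fin (n + 1) → Fin (n + 1) → ℝ)
    (Q q : Finset (Fin (n + 1)) → ℝ)
    (Ecal rstar : (Fin (n + 1) → ℝ) → ℝ)
    (hμ : ∀ i, 0 < μ i)
    (hsymw : ∀ i j, w i j = w j i)
    (hnonneg : ∀ i j, 0 ≤ w i j)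
    (hd : ∀ i, d i = ∑ j, w i j)
    (hvol : volV = ∑ i, d i)
    (hvolpos : 0 < volV)
    (hμV : μV = ∑ i, μ i)
    (hM : ∀ i j, M i j = (1 / μ i) * (w i j - d i * d j / volV))
    (hQ : ∀ A : Finset (Fin (n + 1)),
      Q A = (∑ i ∈ A, ∑ j ∈ A, w i j) - (∑ i ∈ A, d i) ^ 2 / volV)
    (hq : ∀ A : Finset (Fin (n + 1)), q A = 2 * Q A / μV)
    (hE : ∀ x, Ecal x = (1 / 2) * ∑ i, ∑ j, μ i * (-(M i j)) * |x i - x j|)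
    (hrstar : ∀ x, rstar x
      = Ecal x / (Finset.univ.sup' Finset.univ_nonempty fun i => |x i|)) :
    (∀ A : Finset (Fin (n + 1)),
      rstar (fun i => if i ∈ A then (1 : ℝ) else -1) = q A * μV) ∧
    ∀ L : ℝ,
      IsGreatest {r : ℝ | ∃ x : Fin (n + 1) → ℝ, x ≠ 0 ∧ r = rstar x} L →
      IsGreatest {r : ℝ | ∃ A : Finset (Fin (n + 1)), r = q A} (L / μV) := by
  set B : Fin (n+1) → Fin (n+1) → ℝ := fun i j => w i j - d i * d j / volV with hB
  have hμVpos : 0 < μV := hμV ▸ Finset.sum_pos (fun i _ => hμ i) univ_nonempty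
  have hsymB : ∀ i j, B i j = B j i := by
    intro i j; simp only [hB]; rw [hsymw]; ring
  have hrowB : ∀ i, ∑ j, B i j = 0 := by
    intro i
    simp only [hB]
    rw [Finset.sum_sub_distrib]
    have e1 : ∑ j, d i * d j / volV = d i * (∑ j, d j) / volV := by
      rw [Finset.mul_sum, Finset.sum_div]
    rw [e1, ← hvol, ← hd i, mul_div_assoc, div_self hvolpos.ne', mul_one, sub_self]
  have hQB : ∀ A, QB B A = Q A := by
    intro A
    have e1 : ∀ i, ∑ j ∈ A, B i j
        = (∑ j ∈ A, w i j) - d i * (∑ j ∈ A, d j) / volV := by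
      intro i
      simp only [hB]
      rw [Finset.sum_sub_distrib]
      congr 1
      rw [Finset.mul_sum, Finset.sum_div]
    calc QB B A = ∑ i ∈ A, ((∑ j ∈ A, w i j) - d i * (∑ j ∈ A, d j) / volV) :=
          Finset.sum_congr rfl fun i _ => e1 i
      _ = (∑ i ∈ A, ∑ j ∈ A, w i j) - (∑ i ∈ A, d i) * (∑ j ∈ A, d j) / volV := by
          rw [Finset.sum_sub_distrib]
          congr 1
          rw [← Finset.sum_div, ← Finset.sum_mul]
      _ = Q A := by rw [hQ, sq]
  have hEcal : ∀ x, Ecal x = EB B x := by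
    intro x
    have e : ∀ i j, μ i * (-(M i j)) * |x i - x j| = -(B i j * |x i - x j|) := by
      intro i j
      rw [hM]
      have hμi := (hμ i).ne'
      simp only [hB]
      field_simp
    rw [hE]
    simp only [e, Finset.sum_neg_distrib]
    unfold EB
    ring
  have part1 : ∀ A : Finset (Fin (n + 1)),
      rstar (fun i => if i ∈ A then (1 : ℝ) else -1) = q A * μV := by
    intro A
    set xA : Fin (n+1) → ℝ := fun i => if i ∈ A then (1:ℝ) else -1 with hxA
    set cA : Fin (n+1) → ℝ := fun i => if i ∈ A then (1:ℝ) else 0 with hcA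
    have habs2 : ∀ i j, |xA i - xA j| = |cA i - cA j| + 1 * |cA i - cA j| := by
      intro i j
      by_cases hi : i ∈ A <;> by_cases hj : j ∈ A <;>
        simp [hxA, hcA, hi, hj] <;> norm_num
    have hEx : EB B xA = 2 * Q A := by
      rw [EB_decomp B xA cA cA 1 habs2, EB_indicator B hsymB hrowB A, hQB]
      ring
    have hsup : (univ.sup' univ_nonempty fun i => |xA i|) = 1 := by
      apply le_antisymm
      · apply Finset.sup'_le
        intro i _
        by_cases h : i ∈ A <;> simp [hxA, h]
      · calc (1:ℝ) = |xA 0| := by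
              by_cases h : (0 : Fin (n+1)) ∈ A <;> simp [hxA, h]
          _ ≤ _ := Finset.le_sup' (fun i => |xA i|) (mem_univ (0 : Fin (n+1)))
    rw [hrstar, hsup, hEcal, hEx, hq]
    field_simp
  refine ⟨part1, ?_⟩
  intro L hL
  obtain ⟨Astar, -, hAstar⟩ := Finset.exists_max_image univ Q univ_nonempty
  have hub : ∀ A, Q A ≤ Q Astar := fun A => hAstar A (mem_univ A)
  have hQBub : ∀ A, QB B A ≤ Q Astar := fun A => (hQB A) ▸ hub A
  have hxAne : ∀ A : Finset (Fin (n+1)),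
      (fun i => if i ∈ A then (1:ℝ) else -1) ≠ 0 := by
    intro A h
    have := congrFun h 0
    by_cases h0 : (0 : Fin (n+1)) ∈ A <;> simp [h0] at this
  have hge : ∀ A, q A * μV ≤ L := fun A => hL.2 ⟨_, hxAne A, (part1 A).symm⟩
  obtain ⟨x, hx0, hLx⟩ := hL.1
  have htpos : 0 < univ.sup' univ_nonempty fun i => |x i| := by
    obtain ⟨i, hi⟩ : ∃ i, x i ≠ 0 := by
      by_contra h; push_neg at h; exact hx0 (funext h)
    exact lt_of_lt_of_le (abs_pos.mpr hi) (Finset.le_sup' (fun i => |x i|) (mem_univ i))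
  have hbd : ∀ i, |x i| ≤ univ.sup' univ_nonempty fun i => |x i| :=
    fun i => Finset.le_sup' (fun i => |x i|) (mem_univ i)
  have hEx := EB_le B hsymB hrowB (Q Astar) hQBub (Finset.image x univ).card x
    (-(univ.sup' univ_nonempty fun i => |x i|)) (univ.sup' univ_nonempty fun i => |x i|)
    le_rfl (fun i => neg_le_of_abs_le (hbd i)) (fun i => le_of_abs_le (hbd i))
  have hLle : L ≤ 2 * Q Astar := by
    rw [hLx, hrstar, hEcal, div_le_iff₀ htpos]
    nlinarith [hEx]
  have hQq : q Astar * μV = 2 * Q Astar := by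
    rw [hq]; field_simp
  have hLeq : L = q Astar * μV := le_antisymm (hQq ▸ hLle) (hge Astar)
  constructor
  · exact ⟨Astar, by rw [hLeq]; field_simp⟩
  · rintro r ⟨A, rfl⟩
    rw [le_div_iff₀ hμVpos]
    exact hge A
end

section
/- Monotonicity of generalized RatioDCA: let f₁,f₂,g₁,g₂: ℝ^n → ℝ be convex positively one-homogeneous with g₁ − g₂ ≥ 0 and r(x) = (f₁(x) − f₂(x))/(g₁(x) − g₂(x)) (defined where the denominator is positive). If λ_k = r(x_k) ≥ 0, F₂(x_k) ∈ ∂f₂(x_k), G₁(x_k) ∈ ∂g₁(x_k), and x_{k+1} minimizes ξ ↦ f₁(ξ) − ⟨ξ,F₂(x_k)⟩ + λ_k(g₂(ξ) − ⟨ξ,G₁(x_k)⟩) over the unit ball, with minimum value strictly negative, then r(x_{k+1}) < λ_k. -/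
open Finset

/-- Monotonicity of the generalized RatioDCA step: if `λ_k = r(x_k) ≥ 0` and
the inner minimizer `x_{k+1}` of
`ξ ↦ f₁(ξ) − ⟨ξ,F₂(x_k)⟩ + λ_k(g₂(ξ) − ⟨ξ,G₁(x_k)⟩)` over the unit ball has
strictly negative objective value, then `r(x_{k+1}) < λ_k`. -/
theorem generalized_ratioDCA_monotone
    (n : ℕ) (f₁ f₂ g₁ g₂ : (Fin n → ℝ) → ℝ)
    (hconv₁ : ConvexOn ℝ Set.univ f₁) (hconv₂ : ConvexOn ℝ Set.univ f₂)
    (hconv₃ : ConvexOn ℝ Set.univ g₁) (hconv₄ : ConvexOn ℝ Set.univ g₂)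
    (hhom₁ : ∀ (α : ℝ), 0 ≤ α → ∀ x, f₁ (α • x) = α * f₁ x)
    (hhom₂ : ∀ (α : ℝ), 0 ≤ α → ∀ x, f₂ (α • x) = α * f₂ x)
    (hhom₃ : ∀ (α : ℝ), 0 ≤ α → ∀ x, g₁ (α • x) = α * g₁ x)
    (hhom₄ : ∀ (α : ℝ), 0 ≤ α → ∀ x, g₂ (α • x) = α * g₂ x)
    (hg : ∀ x, 0 ≤ g₁ x - g₂ x)
    (xk xk1 F2 G1 : Fin n → ℝ) (lam : ℝ)
    (hxk : ∑ i, (xk i) ^ 2 ≤ 1)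
    (hF2 : ∀ z, f₂ z ≥ f₂ xk + ∑ i, F2 i * (z i - xk i))
    (hG1 : ∀ z, g₁ z ≥ g₁ xk + ∑ i, G1 i * (z i - xk i))
    (hdenk : 0 < g₁ xk - g₂ xk)
    (hlam : lam = (f₁ xk - f₂ xk) / (g₁ xk - g₂ xk))
    (hlam0 : 0 ≤ lam)
    (hball : ∑ i, (xk1 i) ^ 2 ≤ 1)
    (hmin : ∀ ξ : Fin n → ℝ, (∑ i, (ξ i) ^ 2) ≤ 1 →
      f₁ xk1 - (∑ i, xk1 i * F2 i) + lam * (g₂ xk1 - ∑ i, xk1 i * G1 i)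
        ≤ f₁ ξ - (∑ i, ξ i * F2 i) + lam * (g₂ ξ - ∑ i, ξ i * G1 i))
    (hneg : f₁ xk1 - (∑ i, xk1 i * F2 i)
        + lam * (g₂ xk1 - ∑ i, xk1 i * G1 i) < 0)
    (hden1 : 0 < g₁ xk1 - g₂ xk1) :
    (f₁ xk1 - f₂ xk1) / (g₁ xk1 - g₂ xk1) < lam := by
  have hz₂ : f₂ 0 = 0 := by simpa using hhom₂ 0 le_rfl 0
  have hz₃ : g₁ 0 = 0 := by simpa using hhom₃ 0 le_rfl 0
  have hcomm1 : ∀ z : Fin n → ℝ, ∑ i, F2 i * z i = ∑ i, z i * F2 i := by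
    intro z; simp [mul_comm]
  have hcomm2 : ∀ z : Fin n → ℝ, ∑ i, G1 i * z i = ∑ i, z i * G1 i := by
    intro z; simp [mul_comm]
  have key2 : ∑ i, xk1 i * F2 i ≤ f₂ xk1 := by
    have h1 := hF2 xk1
    have h0 := hF2 ((2:ℝ) • xk)
    rw [hhom₂ 2 (by norm_num)] at h0
    rw [Finset.sum_congr rfl (fun i _ => show F2 i * (((2:ℝ) • xk) i - xk i) = F2 i * xk i by
      simp only [Pi.smul_apply, smul_eq_mul]; ring)] at h0
    simp only [mul_sub, Finset.sum_sub_distrib, hz₂, Pi.zero_apply, mul_zero,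
      Finset.sum_const_zero] at h1 h0
    rw [hcomm1 xk1] at h1
    linarith
  have key1 : ∑ i, xk1 i * G1 i ≤ g₁ xk1 := by
    have h1 := hG1 xk1
    have h0 := hG1 ((2:ℝ) • xk)
    rw [hhom₃ 2 (by norm_num)] at h0
    rw [Finset.sum_congr rfl (fun i _ => show G1 i * (((2:ℝ) • xk) i - xk i) = G1 i * xk i by
      simp only [Pi.smul_apply, smul_eq_mul]; ring)] at h0
    simp only [mul_sub, Finset.sum_sub_distrib, hz₃, Pi.zero_apply, mul_zero,
      Finset.sum_const_zero] at h1 h0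
    rw [hcomm2 xk1] at h1
    linarith
  rw [div_lt_iff₀ hden1]
  nlinarith [mul_le_mul_of_nonneg_left key1 hlam0]
end

section
/- Stationarity of generalized RatioDCA: in the setting of generalized RatioDCA with λ_k ≥ 0, if the inner minimum of τ₁(ξ) = f₁(ξ) − ⟨ξ,F₂(x_k)⟩ + λ_k(g₂(ξ) − ⟨ξ,G₁(x_k)⟩) over the unit ball is zero (attained at x_{k+1} = x_k), then 0 ∈ ∂f₁(x_k) − F₂(x_k) − λ_k(G₁(x_k) − ∂g₂(x_k)); i.e., λ_k is a nonlinear eigenvalue of r with eigenvector x_k. -/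
open Finset Pointwise

lemma myaux_subadd {E : Type*} [AddCommGroup E] [Module ℝ E]
    (h : E → ℝ) (hc : ConvexOn ℝ Set.univ h)
    (hh : ∀ (α : ℝ), 0 ≤ α → ∀ x, h (α • x) = α * h x) :
    ∀ x y, h (x + y) ≤ h x + h y := by
  intro x y
  have h2 : h (x + y) = 2 * h ((1/2 : ℝ) • x + (1/2 : ℝ) • y) := by
    rw [← hh 2 (by norm_num) _]
    congr 1
    rw [smul_add, smul_smul, smul_smul]
    norm_num
  have h3 := hc.2 (Set.mem_univ x) (Set.mem_univ y)
    (by norm_num : (0:ℝ) ≤ 1/2) (by norm_num : (0:ℝ) ≤ 1/2) (by norm_num)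
  simp only [smul_eq_mul] at h3
  linarith

lemma myaux_zero {E : Type*} [AddCommGroup E] [Module ℝ E]
    (h : E → ℝ) (hh : ∀ (α : ℝ), 0 ≤ α → ∀ x, h (α • x) = α * h x) :
    h 0 = 0 := by
  have := hh 0 le_rfl 0
  simpa using this

lemma myaux_hb {E : Type*} [AddCommGroup E] [Module ℝ E] (N : E → ℝ)
    (hhom : ∀ c : ℝ, 0 < c → ∀ x, N (c • x) = c * N x)
    (hadd : ∀ x y, N (x + y) ≤ N x + N y) (h0 : 0 ≤ N 0) :
    ∃ g : E →ₗ[ℝ] ℝ, ∀ x, g x ≤ N x := by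
  have hf : ∀ x : ((0 : E →ₗ[ℝ] ℝ).toPMap ⊥).domain,
      ((0 : E →ₗ[ℝ] ℝ).toPMap ⊥) x ≤ N x := by
    rintro ⟨x, hx⟩
    rw [LinearMap.toPMap_domain, Submodule.mem_bot] at hx
    subst hx
    simpa [LinearMap.toPMap_apply] using h0
  obtain ⟨g, -, hg⟩ := exists_extension_of_le_sublinear
    ((0 : E →ₗ[ℝ] ℝ).toPMap ⊥) N hhom hadd hf
  exact ⟨g, hg⟩

lemma myaux_dot {n : ℕ} (g : (Fin n → ℝ) →ₗ[ℝ] ℝ) (z : Fin n → ℝ) :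
    g z = ∑ i, z i * g (fun j => if i = j then (1:ℝ) else 0) := by
  rw [LinearMap.pi_apply_eq_sum_univ g z]
  exact Finset.sum_congr rfl fun i _ => by rw [smul_eq_mul]

theorem test (n : ℕ) : True := trivial
/-- Stationarity of the generalized RatioDCA: if `λ_k = r(x_k) ≥ 0` and the
inner minimum of `τ₁` over the unit ball is zero, attained at `x_k` itself,
then `0 ∈ ∂f₁(x_k) − F₂(x_k) − λ_k(G₁(x_k) − ∂g₂(x_k))`, i.e. `(λ_k, x_k)`
is a nonlinear eigenpair of `r`. -/
theorem generalized_ratioDCA_stationary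
    (n : ℕ) (f₁ f₂ g₁ g₂ : (Fin n → ℝ) → ℝ)
    (hconv₁ : ConvexOn ℝ Set.univ f₁) (hconv₂ : ConvexOn ℝ Set.univ f₂)
    (hconv₃ : ConvexOn ℝ Set.univ g₁) (hconv₄ : ConvexOn ℝ Set.univ g₂)
    (hhom₁ : ∀ (α : ℝ), 0 ≤ α → ∀ x, f₁ (α • x) = α * f₁ x)
    (hhom₂ : ∀ (α : ℝ), 0 ≤ α → ∀ x, f₂ (α • x) = α * f₂ x)
    (hhom₃ : ∀ (α : ℝ), 0 ≤ α → ∀ x, g₁ (α • x) = α * g₁ x)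
    (hhom₄ : ∀ (α : ℝ), 0 ≤ α → ∀ x, g₂ (α • x) = α * g₂ x)
    (hg : ∀ x, 0 ≤ g₁ x - g₂ x)
    (xk F2 G1 : Fin n → ℝ) (lam : ℝ)
    (hxknorm : ∑ i, (xk i) ^ 2 = 1)
    (hF2 : ∀ z, f₂ z ≥ f₂ xk + ∑ i, F2 i * (z i - xk i))
    (hG1 : ∀ z, g₁ z ≥ g₁ xk + ∑ i, G1 i * (z i - xk i))
    (hdenk : 0 < g₁ xk - g₂ xk)
    (hlam : lam = (f₁ xk - f₂ xk) / (g₁ xk - g₂ xk))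
    (hlam0 : 0 ≤ lam)
    (hmin : ∀ ξ : Fin n → ℝ, (∑ i, (ξ i) ^ 2) ≤ 1 →
      0 ≤ f₁ ξ - (∑ i, ξ i * F2 i) + lam * (g₂ ξ - ∑ i, ξ i * G1 i))
    (hzero : f₁ xk - (∑ i, xk i * F2 i)
        + lam * (g₂ xk - ∑ i, xk i * G1 i) = 0) :
    ∃ u v : Fin n → ℝ,
      (∀ z, f₁ z ≥ f₁ xk + ∑ i, u i * (z i - xk i)) ∧
      (∀ z, g₂ z ≥ g₂ xk + ∑ i, v i * (z i - xk i)) ∧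
      ∀ i, u i - F2 i - lam * (G1 i - v i) = 0 := by
  classical
  have hf₁0 : f₁ 0 = 0 := myaux_zero f₁ hhom₁
  have hg₂0 : g₂ 0 = 0 := myaux_zero g₂ hhom₄
  have hf₁add := myaux_subadd f₁ hconv₁ hhom₁
  have hg₂add := myaux_subadd g₂ hconv₄ hhom₄
  set F : Fin n → ℝ := fun i => F2 i + lam * G1 i with hFdef
  have hFsum : ∀ w : Fin n → ℝ, (∑ i, w i * F i)
      = (∑ i, w i * F2 i) + lam * ∑ i, w i * G1 i := by
    intro w
    rw [Finset.mul_sum, ← Finset.sum_add_distrib]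
    exact Finset.sum_congr rfl (fun i _ => by simp only [hFdef]; ring)
  -- the inner objective is nonnegative everywhere by homogeneity
  have htau : ∀ z : Fin n → ℝ, (∑ i, z i * F i) ≤ f₁ z + lam * g₂ z := by
    intro z
    rcases eq_or_ne z 0 with rfl | hz
    · simp [hFsum, hf₁0, hg₂0]
    · have hs2 : 0 < ∑ i, (z i)^2 := by
        rcases Function.ne_iff.1 hz with ⟨j, hj⟩
        have hj' : 0 < (z j)^2 := lt_of_le_of_ne (sq_nonneg _) (Ne.symm (pow_ne_zero 2 hj))
        exact Finset.sum_pos' (fun i _ => by positivity) ⟨j, Finset.mem_univ j, hj'⟩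
      set s := Real.sqrt (∑ i, (z i)^2) with hsdef
      have hs : 0 < s := Real.sqrt_pos.2 hs2
      have hs' : s^2 = ∑ i, (z i)^2 := Real.sq_sqrt hs2.le
      have hξ : ∑ i, ((s⁻¹ • z) i)^2 ≤ 1 := by
        have he : ∑ i, ((s⁻¹ • z) i)^2 = s⁻¹^2 * ∑ i, (z i)^2 := by
          rw [Finset.mul_sum]
          exact Finset.sum_congr rfl fun i _ => by
            simp only [Pi.smul_apply, smul_eq_mul]; ring
        rw [he, ← hs']
        field_simp
        exact le_rfl
      have h := hmin (s⁻¹ • z) hξ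
      rw [hhom₁ s⁻¹ (inv_nonneg.2 hs.le) z, hhom₄ s⁻¹ (inv_nonneg.2 hs.le) z] at h
      have hd1 : ∑ i, (s⁻¹ • z) i * F2 i = s⁻¹ * ∑ i, z i * F2 i := by
        rw [Finset.mul_sum]
        exact Finset.sum_congr rfl fun i _ => by
          simp only [Pi.smul_apply, smul_eq_mul]; ring
      have hd2 : ∑ i, (s⁻¹ • z) i * G1 i = s⁻¹ * ∑ i, z i * G1 i := by
        rw [Finset.mul_sum]
        exact Finset.sum_congr rfl fun i _ => by
          simp only [Pi.smul_apply, smul_eq_mul]; ring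
      rw [hd1, hd2] at h
      have hsi : 0 < s⁻¹ := inv_pos.2 hs
      have hA : 0 ≤ f₁ z - (∑ i, z i * F2 i) + lam * (g₂ z - ∑ i, z i * G1 i) := by
        nlinarith [h, hsi]
      rw [hFsum z]
      linarith
  -- superlinear minorant M
  set M : (Fin n → ℝ) → ℝ := fun e => (∑ i, e i * F i) - lam * g₂ e with hMdef
  have hM0 : M 0 = 0 := by simp [hMdef, hg₂0]
  have hMle : ∀ e, M e ≤ f₁ e := by
    intro e
    have := htau e
    simp only [hMdef]
    linarith
  have hsumadd : ∀ x y : Fin n → ℝ, ∑ i, (x + y) i * F i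
      = (∑ i, x i * F i) + ∑ i, y i * F i := by
    intro x y
    rw [← Finset.sum_add_distrib]
    exact Finset.sum_congr rfl fun i _ => by simp only [Pi.add_apply]; ring
  have hMsuper : ∀ x y, M x + M y ≤ M (x + y) := by
    intro x y
    have h1 : g₂ (x + y) ≤ g₂ x + g₂ y := hg₂add x y
    simp only [hMdef]
    rw [hsumadd]
    nlinarith [mul_le_mul_of_nonneg_left h1 hlam0]
  have hsumsmul : ∀ (c : ℝ) (e : Fin n → ℝ), ∑ i, (c • e) i * F i
      = c * ∑ i, e i * F i := by
    intro c e
    rw [Finset.mul_sum]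
    exact Finset.sum_congr rfl fun i _ => by
      simp only [Pi.smul_apply, smul_eq_mul]; ring
  have hMhom : ∀ c : ℝ, 0 ≤ c → ∀ e, M (c • e) = c * M e := by
    intro c hc e
    simp only [hMdef]
    rw [hhom₄ c hc e, hsumsmul]
    ring
  -- sandwich sublinear functional N
  set N : (Fin n → ℝ) → ℝ :=
    fun d => sInf (Set.range fun e => f₁ (d + e) - M e) with hNdef
  have hbdd : ∀ d, ∀ y ∈ Set.range (fun e => f₁ (d + e) - M e), M d ≤ y := by
    rintro d y ⟨e, rfl⟩
    have h1 := hMsuper d e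
    have h2 := hMle (d + e)
    simp only
    linarith
  have hNbdd : ∀ d, BddBelow (Set.range fun e => f₁ (d + e) - M e) :=
    fun d => ⟨M d, hbdd d⟩
  have hNne : ∀ d, (Set.range fun e => f₁ (d + e) - M e).Nonempty :=
    fun d => ⟨_, ⟨0, rfl⟩⟩
  have hNleF : ∀ d, N d ≤ f₁ d := by
    intro d
    have hmem : f₁ d ∈ Set.range fun e => f₁ (d + e) - M e :=
      ⟨0, by simp [hM0]⟩
    exact csInf_le (hNbdd d) hmem
  have hMleN : ∀ d, M d ≤ N d := fun d => le_csInf (hNne d) (hbdd d)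
  have hNhom : ∀ c : ℝ, 0 < c → ∀ d, N (c • d) = c * N d := by
    intro c hc d
    have hset : (Set.range fun e => f₁ (c • d + e) - M e)
        = c • (Set.range fun e => f₁ (d + e) - M e) := by
      ext y
      constructor
      · rintro ⟨e, rfl⟩
        refine ⟨f₁ (d + c⁻¹ • e) - M (c⁻¹ • e), ⟨c⁻¹ • e, rfl⟩, ?_⟩
        simp only [smul_eq_mul]
        have h1 : f₁ (c • d + e) = c * f₁ (d + c⁻¹ • e) := by
          rw [← hhom₁ c hc.le]
          congr 1
          rw [smul_add, smul_smul]
          field_simp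
          rw [one_smul]
        have h2 : M e = c * M (c⁻¹ • e) := by
          rw [← hMhom c hc.le, smul_smul]
          field_simp
          rw [one_smul]
        rw [h1, h2]
        ring
      · rintro ⟨y, ⟨e, rfl⟩, rfl⟩
        refine ⟨c • e, ?_⟩
        simp only [smul_eq_mul]
        rw [← smul_add, hhom₁ c hc.le, hMhom c hc.le]
        ring
    simp only [hNdef]
    rw [hset, Real.sInf_smul_of_nonneg hc.le]
    simp [smul_eq_mul]
  have hNadd : ∀ x y, N (x + y) ≤ N x + N y := by
    intro x y
    have step : ∀ e₁ e₂, N (x + y) ≤ (f₁ (x + e₁) - M e₁) + (f₁ (y + e₂) - M e₂) := by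
      intro e₁ e₂
      have h1 : N (x + y) ≤ f₁ (x + y + (e₁ + e₂)) - M (e₁ + e₂) :=
        csInf_le (hNbdd _) ⟨e₁ + e₂, rfl⟩
      have h2 : f₁ (x + y + (e₁ + e₂)) ≤ f₁ (x + e₁) + f₁ (y + e₂) := by
        have heq : x + y + (e₁ + e₂) = (x + e₁) + (y + e₂) := by abel
        rw [heq]
        exact hf₁add _ _
      have h3 := hMsuper e₁ e₂
      linarith
    have h1 : ∀ e₁, N (x + y) - (f₁ (x + e₁) - M e₁) ≤ N y := by
      intro e₁
      refine le_csInf (hNne y) ?_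
      rintro b ⟨e₂, rfl⟩
      have := step e₁ e₂
      simp only
      linarith
    have h2 : N (x + y) - N y ≤ N x := by
      refine le_csInf (hNne x) ?_
      rintro b ⟨e₁, rfl⟩
      have := h1 e₁
      simp only
      linarith
    linarith
  obtain ⟨g, hgN⟩ := myaux_hb N hNhom hNadd (hM0 ▸ hMleN 0)
  have hgf : ∀ z, g z ≤ f₁ z := fun z => (hgN z).trans (hNleF z)
  have hgM : ∀ z, M z ≤ g z := by
    intro z
    have h1 : N (-z) ≤ f₁ (-z + z) - M z := csInf_le (hNbdd _) ⟨z, rfl⟩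
    have h2 : g (-z) ≤ N (-z) := hgN _
    rw [map_neg] at h2
    rw [neg_add_cancel, hf₁0] at h1
    linarith
  have hMxk : M xk = f₁ xk := by
    simp only [hMdef]
    rw [hFsum xk]
    linarith [hzero]
  have hgxk : g xk = f₁ xk := le_antisymm (hgf xk) (hMxk ▸ hgM xk)
  set u : Fin n → ℝ := fun i => g (fun j => if i = j then (1:ℝ) else 0) with hudef
  have hgsum : ∀ z, g z = ∑ i, z i * u i := fun z => myaux_dot g z
  have hsplit : ∀ z, ∑ i, u i * (z i - xk i) = g z - g xk := by
    intro z
    rw [hgsum z, hgsum xk, ← Finset.sum_sub_distrib]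
    exact Finset.sum_congr rfl fun i _ => by ring
  have cond1 : ∀ z, f₁ z ≥ f₁ xk + ∑ i, u i * (z i - xk i) := by
    intro z
    rw [hsplit, hgxk]
    have := hgf z
    linarith
  rcases eq_or_lt_of_le hlam0 with hlamz | hlamp
  · -- lam = 0 : u = F2, v any subgradient of g₂ at xk
    have hlamz' : lam = 0 := hlamz.symm
    have hgeq : ∀ z, g z = ∑ i, z i * F2 i := by
      intro z
      have h1 : M z ≤ g z := hgM z
      have h2 : M (-z) ≤ g (-z) := hgM (-z)
      have hMz : ∀ w : Fin n → ℝ, M w = ∑ i, w i * F2 i := by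
        intro w
        simp only [hMdef]
        rw [hFsum w, hlamz']
        ring
      rw [hMz, map_neg] at h2
      have hneg : ∑ i, (-z) i * F2 i = -∑ i, z i * F2 i := by
        rw [← Finset.sum_neg_distrib]
        exact Finset.sum_congr rfl fun i _ => by simp only [Pi.neg_apply]; ring
      rw [hneg] at h2
      rw [hMz] at h1
      linarith
    have huF2 : ∀ i, u i = F2 i := by
      intro i
      rw [hudef]
      simp only
      rw [hgeq]
      simp
    -- second Hahn-Banach: subgradient of g₂ at xk
    have hxk0 : xk ≠ 0 := by
      intro h
      rw [h] at hxknorm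
      simp at hxknorm
    have hsub : ∀ x : (LinearPMap.mkSpanSingleton (K := ℝ) (σ := RingHom.id ℝ) xk (g₂ xk) hxk0).domain,
        (LinearPMap.mkSpanSingleton (K := ℝ) (σ := RingHom.id ℝ) xk (g₂ xk) hxk0) x ≤ g₂ x := by
      rintro ⟨x, hx⟩
      obtain ⟨c, rfl⟩ := Submodule.mem_span_singleton.1 hx
      rw [LinearPMap.mkSpanSingleton'_apply]
      simp only [smul_eq_mul, RingHom.id_apply]
      rcases le_or_gt 0 c with hc | hc
      · rw [hhom₄ c hc]
      · have h1 : g₂ (c • xk) = (-c) * g₂ (-xk) := by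
          rw [← hhom₄ (-c) (by linarith)]
          congr 1
          rw [neg_smul, smul_neg, neg_neg]
        have h2 : 0 ≤ g₂ xk + g₂ (-xk) := by
          have := hg₂add xk (-xk)
          rw [add_neg_cancel, hg₂0] at this
          linarith
        rw [h1]
        nlinarith
    obtain ⟨g', hg'ext, hg'⟩ := exists_extension_of_le_sublinear
      (LinearPMap.mkSpanSingleton (K := ℝ) (σ := RingHom.id ℝ) xk (g₂ xk) hxk0) g₂
      (fun c hc x => hhom₄ c hc.le x) hg₂add hsub
    have hg'xk : g' xk = g₂ xk := by
      have h2 := hg'ext ⟨xk, Submodule.mem_span_singleton_self xk⟩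
      rw [LinearPMap.mkSpanSingleton_apply] at h2
      exact h2
    set v : Fin n → ℝ := fun i => g' (fun j => if i = j then (1:ℝ) else 0) with hvdef
    have hg'sum : ∀ z, g' z = ∑ i, z i * v i := fun z => myaux_dot g' z
    have hsplit' : ∀ z, ∑ i, v i * (z i - xk i) = g' z - g' xk := by
      intro z
      rw [hg'sum z, hg'sum xk, ← Finset.sum_sub_distrib]
      exact Finset.sum_congr rfl fun i _ => by ring
    refine ⟨u, v, cond1, ?_, ?_⟩
    · intro z
      rw [hsplit', hg'xk]
      have := hg' z
      linarith
    · intro i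
      rw [huF2 i, hlamz']
      ring
  · -- lam > 0
    have hlamne : lam ≠ 0 := ne_of_gt hlamp
    set v : Fin n → ℝ := fun i => (F i - u i) / lam with hvdef
    have hvsum : ∀ z, ∑ i, z i * v i = ((∑ i, z i * F i) - g z) / lam := by
      intro z
      rw [hgsum z, eq_div_iff hlamne, Finset.sum_mul, ← Finset.sum_sub_distrib]
      refine Finset.sum_congr rfl fun i _ => ?_
      simp only [hvdef]
      field_simp
    have hFxk : ∑ i, xk i * F i = f₁ xk + lam * g₂ xk := by
      rw [hFsum xk]
      linarith [hzero]
    have hsplit' : ∀ z, ∑ i, v i * (z i - xk i)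
        = ((∑ i, z i * F i) - g z) / lam - g₂ xk := by
      intro z
      have h1 : ∑ i, v i * (z i - xk i) = (∑ i, z i * v i) - ∑ i, xk i * v i := by
        rw [← Finset.sum_sub_distrib]
        exact Finset.sum_congr rfl fun i _ => by ring
      rw [h1, hvsum z, hvsum xk, hFxk, hgxk]
      field_simp
      ring
    refine ⟨u, v, cond1, ?_, ?_⟩
    · intro z
      rw [hsplit' z]
      have h1 : M z ≤ g z := hgM z
      simp only [hMdef] at h1
      rw [ge_iff_le, ← sub_nonneg]
      have h2 : g₂ z - (g₂ xk + (((∑ i, z i * F i) - g z) / lam - g₂ xk))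
          = (lam * g₂ z - ((∑ i, z i * F i) - g z)) / lam := by
        field_simp
        ring
      rw [h2]
      apply div_nonneg _ hlamp.le
      linarith
    · intro i
      simp only [hvdef, hFdef]
      field_simp
      ring
end
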